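/- The tetrahedron trinomial transform of Pascal's triangle equals the binomial transform of the central binomial coefficients: Σ_{i=0}^{n} Σ_{j=0}^{i} T(n; j, n-i, i-j) · C(i,j) = Σ_{ℓ=0}^{n} C(n,ℓ) · C(2ℓ,ℓ) for all n ≥ 0. -/

import Mathlib

def trinom (n p q r : ℕ) : ℕ := n.factorial / (p.factorial * q.factorial * r.factorial)

lemma trinom_eq (n i j : ℕ) (hj : j ≤ i) (hi : i ≤ n) :
    trinom n j (n - i) (i - j) = n.choose i * i.choose j := by
  have h1 := Nat.choose_mul_factorial_mul_factorial hi
  have h2 := Nat.choose_mul_factorial_mul_factorial hj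
  have hpos : 0 < j.factorial * (n - i).factorial * (i - j).factorial :=
    Nat.mul_pos (Nat.mul_pos j.factorial_pos (n - i).factorial_pos) (i - j).factorial_pos
  have key : n.choose i * i.choose j * (j.factorial * (n - i).factorial * (i - j).factorial)
      = n.factorial := by
    rw [← h1, ← h2]; ring
  unfold trinom
  rw [← key, Nat.mul_div_cancel _ hpos]

lemma central (i : ℕ) :
    ∑ j ∈ Finset.range (i + 1), i.choose j * i.choose j = (2 * i).choose i := by
  rw [two_mul, Nat.add_choose_eq, Finset.Nat.sum_antidiagonal_eq_sum_range_succ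
    (fun a b => i.choose a * i.choose b)]
  refine Finset.sum_congr rfl fun j hj => ?_
  rw [Nat.choose_symm (Nat.lt_succ_iff.mp (Finset.mem_range.mp hj))]

theorem stmt_11 (n : ℕ) :
    ∑ i ∈ Finset.range (n + 1), ∑ j ∈ Finset.range (i + 1),
        trinom n j (n - i) (i - j) * i.choose j =
      ∑ ℓ ∈ Finset.range (n + 1), n.choose ℓ * (2 * ℓ).choose ℓ := by
  refine Finset.sum_congr rfl fun i hi => ?_
  have hi' : i ≤ n := Nat.lt_succ_iff.mp (Finset.mem_range.mp hi)
  rw [← central i, Finset.mul_sum]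
  refine Finset.sum_congr rfl fun j hj => ?_
  have hj' : j ≤ i := Nat.lt_succ_iff.mp (Finset.mem_range.mp hj)
  rw [trinom_eq n i j hj' hi']
  ring
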